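/- Negative shift removal: for every negative proposition A⁻ with erasure (A⁻)• = P, there exists a negative proposition B⁻, not of the form ↑↓C⁻, such that (B⁻)• = P and, for every context Γ and stable succedent U, derivability of Γ, B⁻ ; · ⊢ U implies derivability of Γ, A⁻ ; · ⊢ U in the focused sequent calculus for polarized intuitionistic logic. -/

import Mathlib

namespace StructuralFocalization

/- Polarized propositional intuitionistic logic -/
mutual
inductive PProp : Type
  | atom : Nat → PProp
  | down : NProp → PProp
  | bot  : PProp
  | or   : PProp → PProp → PProp
  | top  : PProp
  | and  : PProp → PProp → PProp
inductive NProp : Type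
  | atom : Nat → NProp
  | up   : PProp → NProp
  | imp  : PProp → NProp → NProp
  | top  : NProp
  | and  : NProp → NProp → NProp
end

/- Hypotheses: negative propositions or suspended positives ⟨A⁺⟩ -/
inductive Hyp : Type
  | neg  : NProp → Hyp
  | susp : PProp → Hyp

/- Succedents: A⁺, A⁻, or suspended ⟨A⁻⟩ -/
inductive Succ : Type
  | pos  : PProp → Succ
  | neg  : NProp → Succ
  | susp : NProp → Succ

abbrev Ctx := List Hyp

def Succ.stable : Succ → Prop
  | .pos _ => True
  | .susp _ => True
  | .neg _ => False

def Hyp.suspNormal : Hyp → Prop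
  | .susp (PProp.atom _) => True
  | .susp _ => False
  | .neg _ => True

def Ctx.suspNormal (Γ : Ctx) : Prop := ∀ h ∈ Γ, h.suspNormal

def Succ.suspNormal : Succ → Prop
  | .susp (NProp.atom _) => True
  | .susp _ => False
  | _ => True

/- The focused sequent calculus (Figures 3 and 4 of "Structural focalization",
   with the generalized id⁺/id⁻ rules for arbitrary suspended propositions). -/
mutual
/-- Right focus: Γ ⊢ [A⁺] -/
inductive RFoc : Ctx → PProp → Prop
  | idP {Γ A} : Hyp.susp A ∈ Γ → RFoc Γ A
  | downR {Γ A} : Inv Γ [] (Succ.neg A) → RFoc Γ (PProp.down A)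
  | orR1 {Γ A B} : RFoc Γ A → RFoc Γ (PProp.or A B)
  | orR2 {Γ A B} : RFoc Γ B → RFoc Γ (PProp.or A B)
  | topR {Γ} : RFoc Γ PProp.top
  | andR {Γ A B} : RFoc Γ A → RFoc Γ B → RFoc Γ (PProp.and A B)
/-- Inversion: Γ ; Ω ⊢ U -/
inductive Inv : Ctx → List PProp → Succ → Prop
  | focR {Γ A} : RFoc Γ A → Inv Γ [] (Succ.pos A)
  | focL {Γ A U} : Hyp.neg A ∈ Γ → Succ.stable U → LFoc Γ A U → Inv Γ [] U
  | etaP {Γ p Ω U} : Inv (Hyp.susp (PProp.atom p) :: Γ) Ω U → Inv Γ (PProp.atom p :: Ω) U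
  | downL {Γ A Ω U} : Inv (Hyp.neg A :: Γ) Ω U → Inv Γ (PProp.down A :: Ω) U
  | botL {Γ Ω U} : Inv Γ (PProp.bot :: Ω) U
  | orL {Γ A B Ω U} : Inv Γ (A :: Ω) U → Inv Γ (B :: Ω) U → Inv Γ (PProp.or A B :: Ω) U
  | topPL {Γ Ω U} : Inv Γ Ω U → Inv Γ (PProp.top :: Ω) U
  | andPL {Γ A B Ω U} : Inv Γ (A :: B :: Ω) U → Inv Γ (PProp.and A B :: Ω) U
  | etaN {Γ p} : Inv Γ [] (Succ.susp (NProp.atom p)) → Inv Γ [] (Succ.neg (NProp.atom p))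
  | upR {Γ A} : Inv Γ [] (Succ.pos A) → Inv Γ [] (Succ.neg (NProp.up A))
  | impR {Γ A B} : Inv Γ [A] (Succ.neg B) → Inv Γ [] (Succ.neg (NProp.imp A B))
  | topNR {Γ} : Inv Γ [] (Succ.neg NProp.top)
  | andNR {Γ A B} : Inv Γ [] (Succ.neg A) → Inv Γ [] (Succ.neg B) →
      Inv Γ [] (Succ.neg (NProp.and A B))
/-- Left focus: Γ ; [A⁻] ⊢ U -/
inductive LFoc : Ctx → NProp → Succ → Prop
  | idN {Γ A} : LFoc Γ A (Succ.susp A)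
  | upL {Γ A U} : Inv Γ [A] U → LFoc Γ (NProp.up A) U
  | impL {Γ A B U} : RFoc Γ A → LFoc Γ B U → LFoc Γ (NProp.imp A B) U
  | andL1 {Γ A B U} : LFoc Γ A U → LFoc Γ (NProp.and A B) U
  | andL2 {Γ A B U} : LFoc Γ B U → LFoc Γ (NProp.and A B) U
end

/- Unpolarized propositions and Kleene's G3 -/
inductive UProp : Type
  | atom : Nat → UProp
  | bot  : UProp
  | or   : UProp → UProp → UProp
  | top  : UProp
  | and  : UProp → UProp → UProp
  | imp  : UProp → UProp → UProp

inductive G3 : List UProp → UProp → Prop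
  | init {Γ p} : UProp.atom p ∈ Γ → G3 Γ (UProp.atom p)
  | botL {Γ Q} : UProp.bot ∈ Γ → G3 Γ Q
  | orR1 {Γ A B} : G3 Γ A → G3 Γ (UProp.or A B)
  | orR2 {Γ A B} : G3 Γ B → G3 Γ (UProp.or A B)
  | orL {Γ A B Q} : UProp.or A B ∈ Γ → G3 (A :: Γ) Q → G3 (B :: Γ) Q → G3 Γ Q
  | topR {Γ} : G3 Γ UProp.top
  | andR {Γ A B} : G3 Γ A → G3 Γ B → G3 Γ (UProp.and A B)
  | andL1 {Γ A B Q} : UProp.and A B ∈ Γ → G3 (A :: Γ) Q → G3 Γ Q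
  | andL2 {Γ A B Q} : UProp.and A B ∈ Γ → G3 (B :: Γ) Q → G3 Γ Q
  | impR {Γ A B} : G3 (A :: Γ) B → G3 Γ (UProp.imp A B)
  | impL {Γ A B Q} : UProp.imp A B ∈ Γ → G3 Γ A → G3 (B :: Γ) Q → G3 Γ Q

/-- G3 with an ordered auxiliary context Ψ: Γ; Ψ ⊢ Q -/
inductive G3Psi : List UProp → List UProp → UProp → Prop
  | cons {Γ P Ψ Q} : G3Psi (P :: Γ) Ψ Q → G3Psi Γ (P :: Ψ) Q
  | nil {Γ Q} : G3 Γ Q → G3Psi Γ [] Q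

/- Erasure -/
mutual
def eraseP : PProp → UProp
  | .atom p => .atom p
  | .down A => eraseN A
  | .bot => .bot
  | .or A B => .or (eraseP A) (eraseP B)
  | .top => .top
  | .and A B => .and (eraseP A) (eraseP B)
def eraseN : NProp → UProp
  | .atom p => .atom p
  | .up A => eraseP A
  | .imp A B => .imp (eraseP A) (eraseN B)
  | .top => .top
  | .and A B => .and (eraseN A) (eraseN B)
end

def eraseHyp : Hyp → UProp
  | .neg A => eraseN A
  | .susp A => eraseP A

def eraseCtx (Γ : Ctx) : List UProp := Γ.map eraseHyp

def eraseSucc : Succ → UProp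
  | .pos A => eraseP A
  | .neg A => eraseN A
  | .susp A => eraseN A

theorem consSub {Γ Γ' : Ctx} {a : Hyp} (h : ∀ x ∈ Γ, x ∈ Γ') :
    ∀ x ∈ (a :: Γ), x ∈ (a :: Γ') := by
  intro x hx
  rcases List.mem_cons.1 hx with h1 | h1
  · exact h1 ▸ List.mem_cons_self
  · exact List.mem_cons_of_mem _ (h _ h1)

theorem Inv.wk {Γ Γ' Ω U} (h : ∀ x ∈ Γ, x ∈ Γ') (d : Inv Γ Ω U) : Inv Γ' Ω U :=
  Inv.rec (motive_1 := fun Γ A _ => ∀ Γ', (∀ x ∈ Γ, x ∈ Γ') → RFoc Γ' A)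
    (motive_2 := fun Γ Ω U _ => ∀ Γ', (∀ x ∈ Γ, x ∈ Γ') → Inv Γ' Ω U)
    (motive_3 := fun Γ A U _ => ∀ Γ', (∀ x ∈ Γ, x ∈ Γ') → LFoc Γ' A U)
    (fun m Γ' h => .idP (h _ m))
    (fun _ ih Γ' h => .downR (ih Γ' h))
    (fun _ ih Γ' h => .orR1 (ih Γ' h))
    (fun _ ih Γ' h => .orR2 (ih Γ' h))
    (fun Γ' _ => .topR)
    (fun _ _ ih1 ih2 Γ' h => .andR (ih1 Γ' h) (ih2 Γ' h))
    (fun _ ih Γ' h => .focR (ih Γ' h))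
    (fun m s _ ih Γ' h => .focL (h _ m) s (ih Γ' h))
    (fun _ ih Γ' h => .etaP (ih _ (consSub h)))
    (fun _ ih Γ' h => .downL (ih _ (consSub h)))
    (fun Γ' _ => .botL)
    (fun _ _ ih1 ih2 Γ' h => .orL (ih1 Γ' h) (ih2 Γ' h))
    (fun _ ih Γ' h => .topPL (ih Γ' h))
    (fun _ ih Γ' h => .andPL (ih Γ' h))
    (fun _ ih Γ' h => .etaN (ih Γ' h))
    (fun _ ih Γ' h => .upR (ih Γ' h))
    (fun _ ih Γ' h => .impR (ih Γ' h))
    (fun Γ' _ => .topNR)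
    (fun _ _ ih1 ih2 Γ' h => .andNR (ih1 Γ' h) (ih2 Γ' h))
    (fun Γ' _ => .idN)
    (fun _ ih Γ' h => .upL (ih Γ' h))
    (fun _ _ ih1 ih2 Γ' h => .impL (ih1 Γ' h) (ih2 Γ' h))
    (fun _ ih Γ' h => .andL1 (ih Γ' h))
    (fun _ ih Γ' h => .andL2 (ih Γ' h))
    d Γ' h

/-- The derivable rule ↑↓L. -/
theorem upDownL {Γ C U} (hU : Succ.stable U)
    (d : Inv (Hyp.neg C :: Γ) [] U) :
    Inv (Hyp.neg (NProp.up (PProp.down C)) :: Γ) [] U :=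
  .focL (List.mem_cons_self) hU
    (.upL (.downL (d.wk (fun x hx => by
      rcases List.mem_cons.1 hx with h1 | h1
      · exact h1 ▸ List.mem_cons_self
      · exact List.mem_cons_of_mem _ (List.mem_cons_of_mem _ h1)))))

/-- Negative shift removal. -/
theorem negative_shift_removal :
    ∀ (A : NProp) (P : UProp), eraseN A = P →
      ∃ B : NProp, (∀ C : NProp, B ≠ NProp.up (PProp.down C)) ∧
        eraseN B = P ∧
        ∀ (Γ : Ctx) (U : Succ), Succ.stable U →
          Inv (Hyp.neg B :: Γ) [] U → Inv (Hyp.neg A :: Γ) [] U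
  | NProp.up (PProp.down C), P, hP =>
    have ⟨B, hB1, hB2, hB3⟩ := negative_shift_removal C P (by simpa [eraseN, eraseP] using hP)
    ⟨B, hB1, hB2, fun Γ U hU d => upDownL hU (hB3 Γ U hU d)⟩
  | NProp.up (PProp.atom p), P, hP => ⟨_, by rintro C ⟨⟩, hP, fun _ _ _ d => d⟩
  | NProp.up PProp.bot, P, hP => ⟨_, by rintro C ⟨⟩, hP, fun _ _ _ d => d⟩
  | NProp.up (PProp.or a b), P, hP => ⟨_, by rintro C ⟨⟩, hP, fun _ _ _ d => d⟩
  | NProp.up PProp.top, P, hP => ⟨_, by rintro C ⟨⟩, hP, fun _ _ _ d => d⟩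
  | NProp.up (PProp.and a b), P, hP => ⟨_, by rintro C ⟨⟩, hP, fun _ _ _ d => d⟩
  | NProp.atom p, P, hP => ⟨_, by rintro C ⟨⟩, hP, fun _ _ _ d => d⟩
  | NProp.imp a b, P, hP => ⟨_, by rintro C ⟨⟩, hP, fun _ _ _ d => d⟩
  | NProp.top, P, hP => ⟨_, by rintro C ⟨⟩, hP, fun _ _ _ d => d⟩
  | NProp.and a b, P, hP => ⟨_, by rintro C ⟨⟩, hP, fun _ _ _ d => d⟩

end StructuralFocalization
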